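/- Let A be a finite nonempty set of nonnegative integers with 0 ∈ A, max(A) = a_m > 0, and gcd of the elements of A equal to 1. Then there exists N and a constant C ≥ 0 such that for all k ≥ N, |kA| = k·a_m + 1 - C; in other words, the sequence k·a_m + 1 - |kA| is eventually constant. -/
import Mathlib

open Finset Pointwise

/-- `itSum k A` is the k-fold sumset A + A + ⋯ + A (with `itSum 0 A = {0}`). -/
def itSum : ℕ → Finset ℤ → Finset ℤ
  | 0, _ => {0}
  | n+1, A => A + itSum n A

/-- `gDiff s d A = sA - dA`. -/
def gDiff (s d : ℕ) (A : Finset ℤ) : Finset ℤ := itSum s A - itSum d A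

lemma itSum_zero (A : Finset ℤ) : itSum 0 A = {0} := rfl
lemma itSum_succ (n : ℕ) (A : Finset ℤ) : itSum (n+1) A = A + itSum n A := rfl

lemma itSum_add (A : Finset ℤ) (m n : ℕ) :
    itSum (m + n) A = itSum m A + itSum n A := by
  induction m with
  | zero => simp [itSum_zero, Finset.singleton_add]
  | succ m ih =>
      rw [Nat.succ_add, itSum_succ, ih, itSum_succ, add_assoc]

lemma zero_mem_itSum {A : Finset ℤ} (h0 : (0:ℤ) ∈ A) (k : ℕ) : (0:ℤ) ∈ itSum k A := by
  induction k with
  | zero => simp [itSum_zero]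
  | succ k ih =>
      rw [itSum_succ]
      simpa using Finset.add_mem_add h0 ih

lemma itSum_mono {A : Finset ℤ} (h0 : (0:ℤ) ∈ A) {k l : ℕ} (h : k ≤ l) :
    itSum k A ⊆ itSum l A := by
  obtain ⟨d, rfl⟩ := Nat.exists_eq_add_of_le h
  intro x hx
  rw [itSum_add]
  simpa using Finset.add_mem_add hx (zero_mem_itSum h0 d)

lemma itSum_bounds {A : Finset ℤ} {a : ℤ} (hpos : ∀ x ∈ A, 0 ≤ x)
    (hmax : ∀ x ∈ A, x ≤ a) {k : ℕ} {x : ℤ} (hx : x ∈ itSum k A) :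
    0 ≤ x ∧ x ≤ (k:ℤ) * a := by
  induction k generalizing x with
  | zero => simp [itSum_zero] at hx; simp [hx]
  | succ k ih =>
      rw [itSum_succ, Finset.mem_add] at hx
      obtain ⟨y, hy, z, hz, rfl⟩ := hx
      obtain ⟨h1, h2⟩ := ih hz
      constructor
      · exact add_nonneg (hpos y hy) h1
      · push_cast
        nlinarith [hmax y hy]

lemma nsmul_mem_itSum {A : Finset ℤ} {x : ℤ} (hx : x ∈ A) (d : ℕ) :
    (d:ℤ) * x ∈ itSum d A := by
  induction d with
  | zero => simp [itSum_zero]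
  | succ d ih =>
      rw [itSum_succ]
      have : ((d:ℤ)+1) * x = x + (d:ℤ) * x := by ring
      push_cast
      rw [this]
      exact Finset.add_mem_add hx ih

lemma bezout (s : Finset ℤ) : ∃ c : ℤ → ℤ, ∑ x ∈ s, c x * x = s.gcd id := by
  induction s using Finset.cons_induction with
  | empty => exact ⟨fun _ => 0, by simp⟩
  | cons a s ha ih =>
      obtain ⟨c, hc⟩ := ih
      refine ⟨Function.update (fun x => Int.gcdB a (s.gcd id) * c x) a (Int.gcdA a (s.gcd id)), ?_⟩
      rw [Finset.sum_cons, Finset.cons_eq_insert, Finset.gcd_insert]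
      rw [Function.update_self]
      have hs : ∑ x ∈ s, Function.update (fun x => Int.gcdB a (s.gcd id) * c x) a
          (Int.gcdA a (s.gcd id)) x * x = Int.gcdB a (s.gcd id) * ∑ x ∈ s, c x * x := by
        rw [Finset.mul_sum]
        refine Finset.sum_congr rfl fun x hx => ?_
        rw [Function.update_of_ne (by rintro rfl; exact ha hx)]
        ring
      rw [hs, hc]
      have := Int.gcd_eq_gcd_ab a (s.gcd id)
      have h2 : GCDMonoid.gcd a (s.gcd id) = (Int.gcd a (s.gcd id) : ℤ) := rfl
      rw [id_eq, h2, this]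
      ring

lemma sum_mem_itSum {A : Finset ℤ} (h0 : (0:ℤ) ∈ A) (f : ℤ → ℕ) :
    ∀ s : Finset ℤ, s ⊆ A → (∑ x ∈ s, (f x : ℤ) * x) ∈ itSum (∑ x ∈ s, f x) A := by
  intro s
  induction s using Finset.cons_induction with
  | empty => intro _; simp [itSum_zero]
  | cons a s ha ih =>
      intro hsub
      have haA : a ∈ A := hsub (Finset.mem_cons_self a s)
      have hsA : s ⊆ A := fun x hx => hsub (Finset.mem_cons.2 (Or.inr hx))
      rw [Finset.sum_cons, Finset.sum_cons, itSum_add]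
      exact Finset.add_mem_add (nsmul_mem_itSum haA (f a)) (ih hsA)

lemma reach (A : Finset ℤ) (a : ℤ) (haA : a ∈ A) (h0 : (0:ℤ) ∈ A)
    (hpos : ∀ x ∈ A, 0 ≤ x) (hmaxx : ∀ x ∈ A, x ≤ a) (ha : 0 < a)
    (hgcd : A.gcd id = 1) :
    ∃ Kb : ℕ, ∀ (n : ℤ) (k : ℕ), (Kb:ℤ) ≤ n → n ≤ (k:ℤ)*a - (Kb:ℤ) →
      n ∈ itSum k A := by
  obtain ⟨c, hc⟩ := bezout A
  rw [hgcd] at hc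
  refine ⟨A.card * (a.toNat * a.toNat), ?_⟩
  intro n k hn hnk
  set T : ℕ := A.card * a.toNat with hT
  have hKb : ((A.card * (a.toNat * a.toNat) : ℕ) : ℤ) = (T:ℤ) * a := by
    rw [hT]
    push_cast [Int.toNat_of_nonneg ha.le]
    ring
  rw [hKb] at hn hnk
  -- the digits
  set d : ℤ → ℕ := fun x => ((n * c x) % a).toNat with hd
  have hdx : ∀ x, (d x : ℤ) = (n * c x) % a := fun x =>
    Int.toNat_of_nonneg (Int.emod_nonneg _ ha.ne')
  have hdlt : ∀ x, (d x : ℤ) < a := fun x => by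
    rw [hdx]; exact Int.emod_lt_of_pos _ ha
  set w : ℤ := ∑ x ∈ A, (d x : ℤ) * x with hw
  have hwmem : w ∈ itSum (∑ x ∈ A, d x) A := sum_mem_itSum h0 d A (Finset.Subset.refl A)
  have hsumd : (∑ x ∈ A, d x) ≤ T := by
    rw [hT]
    calc (∑ x ∈ A, d x) ≤ ∑ _x ∈ A, a.toNat := by
          refine Finset.sum_le_sum fun x _ => ?_
          have h1 := (hdlt x).le
          have : (d x : ℤ) ≤ (a.toNat : ℤ) := by
            rw [Int.toNat_of_nonneg ha.le]; exact h1
          exact_mod_cast this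
        _ = A.card * a.toNat := by simp [Finset.sum_const, Nat.smul_one_eq_cast]
  have hw0 : 0 ≤ w := by
    rw [hw]
    exact Finset.sum_nonneg fun x hx =>
      mul_nonneg (Int.natCast_nonneg _) (hpos x hx)
  have hwle : w ≤ (T:ℤ) * a := by
    have : w ≤ ∑ _x ∈ A, a * a := by
      rw [hw]
      refine Finset.sum_le_sum fun x hx => ?_
      exact mul_le_mul (hdlt x).le (hmaxx x hx) (hpos x hx) ha.le
    rw [Finset.sum_const, nsmul_eq_mul] at this
    calc w ≤ (A.card : ℤ) * (a * a) := this
      _ = (T:ℤ) * a := by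
          rw [hT]; push_cast [Int.toNat_of_nonneg ha.le]; ring
  have hdvd : a ∣ n - w := by
    have hn1 : n = ∑ x ∈ A, (n * c x) * x := by
      calc n = n * 1 := (mul_one n).symm
        _ = n * ∑ x ∈ A, c x * x := by rw [hc]
        _ = ∑ x ∈ A, (n * c x) * x := by rw [Finset.mul_sum]; ring_nf
    have : n - w = ∑ x ∈ A, (n * c x - (d x : ℤ)) * x := by
      rw [hw]
      conv_lhs => rw [hn1]
      rw [← Finset.sum_sub_distrib]
      refine Finset.sum_congr rfl fun x hx => by ring
    rw [this]
    refine Finset.dvd_sum fun x hx => Dvd.dvd.mul_right ?_ x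
    rw [hdx x]
    exact ⟨n * c x / a, by rw [Int.emod_def]; ring⟩
  obtain ⟨j, hj⟩ := hdvd
  have hj0 : 0 ≤ j := by nlinarith
  have hjdef : n = w + (j.toNat : ℤ) * a := by
    rw [Int.toNat_of_nonneg hj0]; linarith [hj]
  have hjk : (∑ x ∈ A, d x) + j.toNat ≤ k := by
    have h1 : (j.toNat : ℤ) * a ≤ ((k:ℤ) - T) * a := by
      rw [Int.toNat_of_nonneg hj0]
      nlinarith
    have h2 : (j.toNat : ℤ) ≤ (k:ℤ) - T := le_of_mul_le_mul_right h1 ha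
    have h3 : ((∑ x ∈ A, d x : ℕ) : ℤ) + (j.toNat : ℤ) ≤ (k:ℤ) := by
      have : ((∑ x ∈ A, d x : ℕ) : ℤ) ≤ (T:ℤ) := by exact_mod_cast hsumd
      linarith
    exact_mod_cast h3
  have : n ∈ itSum ((∑ x ∈ A, d x) + j.toNat) A := by
    rw [itSum_add, hjdef]
    exact Finset.add_mem_add hwmem (nsmul_mem_itSum haA j.toNat)
  exact itSum_mono h0 hjk this

lemma itSum_reflect (A : Finset ℤ) (a : ℤ) (k : ℕ) :
    itSum k (A.image (fun x => a - x)) = (itSum k A).image (fun x => (k:ℤ)*a - x) := by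
  induction k with
  | zero => simp [itSum_zero]
  | succ k ih =>
      rw [itSum_succ, itSum_succ, ih]
      ext z
      simp only [Finset.mem_add, Finset.mem_image]
      constructor
      · rintro ⟨y, ⟨u, hu, rfl⟩, w, ⟨v, hv, rfl⟩, rfl⟩
        exact ⟨u + v, ⟨u, hu, v, hv, rfl⟩, by push_cast; ring⟩
      · rintro ⟨x, ⟨u, hu, v, hv, rfl⟩, rfl⟩
        exact ⟨a - u, ⟨u, hu, rfl⟩, (k:ℤ)*a - v, ⟨v, hv, rfl⟩, by push_cast; ring⟩

lemma exists_subset_itSum {A : Finset ℤ} (h0 : (0:ℤ) ∈ A) (E : Finset ℤ)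
    (hE : ∀ x ∈ E, ∃ k, x ∈ itSum k A) : ∃ k₀, E ⊆ itSum k₀ A := by
  induction E using Finset.cons_induction with
  | empty => exact ⟨0, by simp⟩
  | cons b E hb ih =>
      obtain ⟨k₁, hk₁⟩ := ih fun x hx => hE x (Finset.mem_cons.2 (Or.inr hx))
      obtain ⟨k₂, hk₂⟩ := hE b (Finset.mem_cons_self b E)
      refine ⟨max k₁ k₂, ?_⟩
      intro x hx
      rcases Finset.mem_cons.1 hx with rfl | hx
      · exact itSum_mono h0 (le_max_right _ _) hk₂
      · exact itSum_mono h0 (le_max_left _ _) (hk₁ hx)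

lemma stab (A : Finset ℤ) (a : ℤ) (h0 : (0:ℤ) ∈ A) (hpos : ∀ x ∈ A, 0 ≤ x)
    (hmaxx : ∀ x ∈ A, x ≤ a) (L : ℤ) :
    ∃ (k₀ : ℕ) (E : Finset ℤ), E ⊆ Finset.Icc 0 (L-1) ∧
      ∀ k, k₀ ≤ k → (itSum k A).filter (fun x => x < L) = E := by
  classical
  set E : Finset ℤ := (Finset.Icc 0 (L-1)).filter (fun x => ∃ k, x ∈ itSum k A) with hEdef
  obtain ⟨k₀, hk₀⟩ := exists_subset_itSum h0 E
    (fun x hx => (Finset.mem_filter.1 hx).2)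
  refine ⟨k₀, E, Finset.filter_subset _ _, fun k hk => ?_⟩
  ext x
  simp only [Finset.mem_filter, hEdef, Finset.mem_Icc]
  constructor
  · rintro ⟨hx, hxL⟩
    exact ⟨⟨(itSum_bounds hpos hmaxx hx).1, by omega⟩, k, hx⟩
  · rintro ⟨⟨h1, h2⟩, hex⟩
    have hxE : x ∈ E := by
      rw [hEdef, Finset.mem_filter]
      exact ⟨Finset.mem_Icc.2 ⟨h1, h2⟩, hex⟩
    exact ⟨itSum_mono h0 hk (hk₀ hxE), by omega⟩

lemma gcd_reflect {A : Finset ℤ} {a : ℤ} (h0 : (0:ℤ) ∈ A)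
    (hgcd : A.gcd id = 1) : (A.image (fun x => a - x)).gcd id = 1 := by
  set B := A.image (fun x => a - x) with hB
  have haB : a ∈ B := by
    rw [hB]; exact Finset.mem_image.2 ⟨0, h0, by ring⟩
  have hda : B.gcd id ∣ a := Finset.gcd_dvd haB
  have hdx : ∀ x ∈ A, B.gcd id ∣ x := by
    intro x hx
    have h1 : B.gcd id ∣ a - x :=
      Finset.gcd_dvd (Finset.mem_image.2 ⟨x, hx, rfl⟩)
    have := dvd_sub hda h1
    simpa using this
  have hone : B.gcd id ∣ 1 := by
    rw [← hgcd]
    exact Finset.dvd_gcd hdx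
  have hnn : 0 ≤ B.gcd id :=
    Int.nonneg_of_normalize_eq_self (Finset.normalize_gcd)
  exact Int.eq_one_of_dvd_one hnn hone

theorem stmt_5 (A : Finset ℤ) (hne : A.Nonempty)
    (hpos : ∀ a ∈ A, 0 ≤ a) (h0 : (0 : ℤ) ∈ A)
    (hmax : 0 < A.max' hne) (hgcd : A.gcd id = 1) :
    ∃ N C : ℕ, ∀ k : ℕ, N ≤ k →
      ((itSum k A).card : ℤ) = (k : ℤ) * A.max' hne + 1 - (C : ℤ) := by
  classical
  set a : ℤ := A.max' hne with haa
  have haA : a ∈ A := A.max'_mem hne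
  have hmaxx : ∀ x ∈ A, x ≤ a := fun x hx => A.le_max' x hx
  set B : Finset ℤ := A.image (fun x => a - x) with hB
  have h0B : (0:ℤ) ∈ B := Finset.mem_image.2 ⟨a, haA, by ring⟩
  have haB : a ∈ B := Finset.mem_image.2 ⟨0, h0, by ring⟩
  have hposB : ∀ y ∈ B, 0 ≤ y := by
    rintro y hy; obtain ⟨x, hx, rfl⟩ := Finset.mem_image.1 hy
    exact sub_nonneg.2 (hmaxx x hx)
  have hmaxB : ∀ y ∈ B, y ≤ a := by
    rintro y hy; obtain ⟨x, hx, rfl⟩ := Finset.mem_image.1 hy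
    have := hpos x hx; omega
  have hgcdB : B.gcd id = 1 := gcd_reflect h0 hgcd
  obtain ⟨KA, hKA⟩ := reach A a haA h0 hpos hmaxx hmax hgcd
  obtain ⟨KB, hKB⟩ := reach B a haB h0B hposB hmaxB hmax hgcdB
  set L : ℤ := (max KA KB : ℕ) + 1 with hL
  have hL1 : 1 ≤ L := by
    rw [hL]
    have : (0:ℤ) ≤ ((max KA KB : ℕ):ℤ) := Int.natCast_nonneg _
    omega
  have hLKA : (KA:ℤ) < L := by
    have : KA ≤ max KA KB := le_max_left _ _
    rw [hL]; push_cast; omega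
  have hLKB : (KB:ℤ) < L := by
    have : KB ≤ max KA KB := le_max_right _ _
    rw [hL]; push_cast; omega
  obtain ⟨k₀A, EA, hEAsub, hEA⟩ := stab A a h0 hpos hmaxx L
  obtain ⟨k₀B, EB, hEBsub, hEB⟩ := stab B a h0B hposB hmaxB L
  have hEAcard : (EA.card : ℤ) ≤ L := by
    have h1 := Finset.card_le_card hEAsub
    rw [Int.card_Icc] at h1
    have h2 : ((L - 1 + 1 - 0).toNat : ℤ) = L := by
      rw [Int.toNat_of_nonneg (by omega)]; ring
    have := (Int.ofNat_le.2 h1 : (EA.card : ℤ) ≤ _)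
    omega
  have hEBcard : (EB.card : ℤ) ≤ L := by
    have h1 := Finset.card_le_card hEBsub
    rw [Int.card_Icc] at h1
    have h2 : ((L - 1 + 1 - 0).toNat : ℤ) = L := by
      rw [Int.toNat_of_nonneg (by omega)]; ring
    have := (Int.ofNat_le.2 h1 : (EB.card : ℤ) ≤ _)
    omega
  refine ⟨k₀A + k₀B + 2 * (max KA KB + 1) + 2, (2*L).toNat - (EA.card + EB.card), ?_⟩
  intro k hk
  have hk0A : k₀A ≤ k := by omega
  have hk0B : k₀B ≤ k := by omega
  have hkL : 2 * L + 2 ≤ (k:ℤ) := by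
    rw [hL]; push_cast
    push_cast at hk
    omega
  set n : ℤ := (k:ℤ) * a with hn
  have hna : 2 * L + 2 ≤ n := by
    calc 2 * L + 2 ≤ (k:ℤ) := hkL
      _ = (k:ℤ) * 1 := by ring
      _ ≤ n := by rw [hn]; exact mul_le_mul_of_nonneg_left hmax (by positivity)
  set S : Finset ℤ := itSum k A with hS
  -- piece 1
  have hp1 : S.filter (fun x => x < L) = EA := hEA k hk0A
  -- split
  have hsplit1 : (S.filter (fun x => x < L)).card
      + (S.filter (fun x => ¬ x < L)).card = S.card :=
    Finset.card_filter_add_card_filter_not _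
  have hsplit2 : ((S.filter (fun x => ¬ x < L)).filter (fun x => x ≤ n - L)).card
      + ((S.filter (fun x => ¬ x < L)).filter (fun x => ¬ x ≤ n - L)).card
      = (S.filter (fun x => ¬ x < L)).card :=
    Finset.card_filter_add_card_filter_not _
  -- middle piece
  have hmid : (S.filter (fun x => ¬ x < L)).filter (fun x => x ≤ n - L)
      = Finset.Icc L (n - L) := by
    ext x
    simp only [Finset.mem_filter, Finset.mem_Icc, not_lt]
    constructor
    · rintro ⟨⟨hxS, h1⟩, h2⟩; exact ⟨h1, h2⟩
    · rintro ⟨h1, h2⟩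
      refine ⟨⟨?_, by omega⟩, h2⟩
      refine hKA x k (by omega) (by rw [← hn]; omega)
  -- top piece
  have hrefl : itSum k B = S.image (fun x => n - x) := by
    rw [hB, hS, hn, itSum_reflect]
  have hEBeq : EB = (S.filter (fun x => n - x < L)).image (fun x => n - x) := by
    rw [← hEB k hk0B, hrefl, Finset.filter_image]
  have hp3 : S.filter (fun x => ¬ x ≤ n - L) = EB.image (fun y => n - y) := by
    rw [hEBeq, Finset.image_image]
    have h1 : ((fun y => n - y) ∘ (fun x => n - x)) = id := by
      funext x; simp
    rw [h1, Finset.image_id]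
    refine Finset.filter_congr fun x hx => ?_
    constructor
    · intro h; omega
    · intro h; omega
  have hcard3 : (S.filter (fun x => ¬ x ≤ n - L)).card = EB.card := by
    rw [hp3]
    exact Finset.card_image_of_injective _ (fun x y h => by omega)
  have hcard2 : ((S.filter (fun x => ¬ x < L)).filter (fun x => x ≤ n - L)).card
      = (n - 2*L + 1).toNat := by
    rw [hmid, Int.card_Icc]
    congr 1
    ring
  have hcard1 : (S.filter (fun x => x < L)).card = EA.card := by rw [hp1]
  have hnest : (S.filter (fun x => ¬ x < L)).filter (fun x => ¬ x ≤ n - L)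
      = S.filter (fun x => ¬ x ≤ n - L) := by
    rw [Finset.filter_filter]
    refine Finset.filter_congr fun x hx => ?_
    constructor
    · intro h; exact h.2
    · intro h; exact ⟨by omega, h⟩
  rw [hnest] at hsplit2
  have hcards : S.card = EA.card + (n - 2*L + 1).toNat + EB.card := by omega
  have h2L : ((2*L).toNat : ℤ) = 2*L := Int.toNat_of_nonneg (by omega)
  have hmidc : (((n - 2*L + 1).toNat):ℤ) = n - 2*L + 1 := Int.toNat_of_nonneg (by omega)
  have hle : EA.card + EB.card ≤ (2*L).toNat := by omega
  have hSc := congrArg (Nat.cast : ℕ → ℤ) hcards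
  push_cast at hSc
  rw [Nat.cast_sub hle]
  push_cast
  omega
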